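/- Chakiri's Lemma: Let t = t_1 · t_2 ⋯ t_m be a factorized expression in a group G. Then this factorization is invariant under t^k for every integer k; that is, for every k ∈ ℤ the tuple ((t_1)_{t^k}, …, (t_m)_{t^k}) is Hurwitz equivalent to (t_1, …, t_m). -/

import Mathlib

variable {G : Type*} [Group G] {m : ℕ}

/-- The Hurwitz move `R_k` (0-indexed: `0 ≤ k`, `k + 1 < m`) on tuples in `G^m`:
it sends `t` to the tuple `s` with `s i = t i` for `i ≠ k, k+1`,
`s k = t k * t (k+1) * (t k)⁻¹` and `s (k+1) = t k`. -/
def hurwitzMove (k : ℕ) (hk : k + 1 < m) (t : Fin m → G) : Fin m → G :=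
  fun i =>
    if (i : ℕ) = k then
      t ⟨k, Nat.lt_of_succ_lt hk⟩ * t ⟨k + 1, hk⟩ * (t ⟨k, Nat.lt_of_succ_lt hk⟩)⁻¹
    else if (i : ℕ) = k + 1 then
      t ⟨k, Nat.lt_of_succ_lt hk⟩
    else t i

/-- `s` is obtained from `t` by a single Hurwitz move. -/
def HurwitzStep (t s : Fin m → G) : Prop :=
  ∃ (k : ℕ) (hk : k + 1 < m), s = hurwitzMove k hk t

/-- Hurwitz equivalence: the equivalence relation generated by Hurwitz moves. -/
def HurwitzEquiv : (Fin m → G) → (Fin m → G) → Prop :=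
  Relation.EqvGen HurwitzStep

/-- A factorized expression `t = t 0 * ⋯ * t (m-1)` is invariant under `h`
if the componentwise conjugate tuple `(h⁻¹ * t i * h)` is Hurwitz equivalent to `t`. -/
def FactorizationInvariant (t : Fin m → G) (h : G) : Prop :=
  HurwitzEquiv (fun i => h⁻¹ * t i * h) t

/-- Componentwise conjugation `g * t i * g⁻¹`. -/
def conjT (g : G) (t : Fin m → G) : Fin m → G := fun i => g * t i * g⁻¹

lemma conjT_conjT (g h : G) (t : Fin m → G) :
    conjT g (conjT h t) = conjT (g * h) t := by
  funext i; simp [conjT, mul_assoc]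

lemma conjT_one (t : Fin m → G) : conjT (1 : G) t = t := by
  funext i; simp [conjT]

lemma hurwitzMove_conjT (g : G) (k : ℕ) (hk : k + 1 < m) (t : Fin m → G) :
    hurwitzMove k hk (conjT g t) = conjT g (hurwitzMove k hk t) := by
  funext i
  simp only [hurwitzMove, conjT]
  split_ifs <;> group

lemma HurwitzStep.conjT {t s : Fin m → G} (g : G) (h : HurwitzStep t s) :
    HurwitzStep (conjT g t) (conjT g s) := by
  obtain ⟨k, hk, rfl⟩ := h
  exact ⟨k, hk, (hurwitzMove_conjT g k hk t).symm⟩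

lemma HurwitzEquiv.conjT {t s : Fin m → G} (g : G) (h : HurwitzEquiv t s) :
    HurwitzEquiv (conjT g t) (conjT g s) := by
  induction h with
  | rel a b hab => exact Relation.EqvGen.rel _ _ (hab.conjT g)
  | refl a => exact Relation.EqvGen.refl _
  | symm a b _ ih => exact Relation.EqvGen.symm _ _ ih
  | trans a b c _ _ ih₁ ih₂ => exact Relation.EqvGen.trans _ _ _ ih₁ ih₂

/-- The rotation of a tuple. -/
def rotT {n : ℕ} (t : Fin (n + 1) → G) : Fin (n + 1) → G := fun i => t (i + 1)

/-- One full sweep of Hurwitz moves: `t` is equivalent to the conjugated rotation. -/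
lemma sweep {n : ℕ} (t : Fin (n + 1) → G) :
    HurwitzEquiv t (conjT (t 0) (rotT t)) := by
  set A : ℕ → (Fin (n + 1) → G) := fun j i =>
    if (i : ℕ) < j then t 0 * t (i + 1) * (t 0)⁻¹
    else if (i : ℕ) = j then t 0 else t i with hA
  have hA0 : A 0 = t := by
    funext i
    simp only [hA]
    split_ifs with h1 h2
    · omega
    · have : i = 0 := Fin.ext h2
      rw [this]
    · rfl
  have hstep : ∀ j (hj : j + 1 < n + 1), A (j + 1) = hurwitzMove j hj (A j) := by
    intro j hj
    have hv : ((⟨j, Nat.lt_of_succ_lt hj⟩ : Fin (n + 1)) + 1) = (⟨j + 1, hj⟩ : Fin (n + 1)) := by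
      apply Fin.ext; simp [Fin.add_def, Nat.mod_eq_of_lt hj]
    funext i
    rcases i with ⟨iv, hlt⟩
    simp only [hA, hurwitzMove, hv]
    split_ifs <;> first | rfl | omega | skip
    congr 3
    apply Fin.ext
    simp [Fin.add_def, Nat.mod_eq_of_lt (show iv + 1 < n + 1 by omega)]
    omega
  have hequiv : ∀ j, j ≤ n → HurwitzEquiv t (A j) := by
    intro j
    induction j with
    | zero => intro _; rw [hA0]; exact Relation.EqvGen.refl _
    | succ j ih =>
      intro hjn
      have hj : j + 1 < n + 1 := by omega
      refine Relation.EqvGen.trans _ _ _ (ih (by omega)) ?_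
      exact Relation.EqvGen.rel _ _ ⟨j, hj, hstep j hj⟩
  have hfin : A n = conjT (t 0) (rotT t) := by
    funext i
    simp only [hA, conjT, rotT]
    by_cases h1 : (i : ℕ) < n
    · rw [if_pos h1]
    · have h2 : (i : ℕ) = n := by omega
      rw [if_neg h1, if_pos h2]
      have : i + 1 = 0 := by
        apply Fin.ext
        simp [Fin.val_add_one, show i = Fin.last n from Fin.ext h2]
      rw [this]
      group
  rw [← hfin]
  exact hequiv n le_rfl

open Fin.NatCast in
lemma rotT_iterate {n : ℕ} (t : Fin (n + 1) → G) (j : ℕ) (i : Fin (n + 1)) :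
    (rotT^[j] t) i = t (i + (j : Fin (n + 1))) := by
  induction j generalizing t i with
  | zero => simp
  | succ j ih =>
    rw [Function.iterate_succ, Function.comp_apply, ih]
    simp only [rotT]
    congr 1
    push_cast
    rw [add_assoc]

open Fin.NatCast in
/-- The key claim: `t` is Hurwitz equivalent to the conjugate of `t` by its total product. -/
lemma full_twist {n : ℕ} (t : Fin (n + 1) → G) :
    HurwitzEquiv t (conjT (List.ofFn t).prod t) := by
  have key : ∀ j, j ≤ n + 1 →
      HurwitzEquiv t (conjT ((List.ofFn t).take j).prod (rotT^[j] t)) := by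
    intro j
    induction j with
    | zero =>
      intro _
      simp only [List.take_zero, List.prod_nil, Function.iterate_zero, id_eq, conjT_one]
      exact Relation.EqvGen.refl t
    | succ j ih =>
      intro hj
      refine Relation.EqvGen.trans _ _ _ (ih (by omega)) ?_
      have hs := sweep (rotT^[j] t)
      have hs2 := hs.conjT ((List.ofFn t).take j).prod
      rw [conjT_conjT] at hs2
      have h0 : (rotT^[j] t) 0 = t ⟨j, by omega⟩ := by
        rw [rotT_iterate]
        congr 1
        apply Fin.ext
        simp [Fin.val_add, Fin.val_natCast, Nat.mod_eq_of_lt (show j < n + 1 by omega)]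
      have hprod : ((List.ofFn t).take (j + 1)).prod
          = ((List.ofFn t).take j).prod * t ⟨j, by omega⟩ := by
        rw [List.prod_take_succ _ j (by simp; omega)]
        congr 1
        rw [List.getElem_ofFn]
      rw [h0] at hs2
      rw [hprod]
      rw [Function.iterate_succ', Function.comp_apply]
      exact hs2
  have := key (n + 1) le_rfl
  have hrot : rotT^[n + 1] t = t := by
    funext i
    rw [rotT_iterate]
    congr 1
    apply Fin.ext
    simp [Fin.val_add, Fin.val_natCast]
  have htake : ((List.ofFn t).take (n + 1)) = List.ofFn t := by
    apply List.take_of_length_le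
    simp
  rwa [hrot, htake] at this

lemma conjT_equiv_int {n : ℕ} (t : Fin (n + 1) → G) (k : ℤ) :
    HurwitzEquiv (conjT ((List.ofFn t).prod ^ k) t) t := by
  set p := (List.ofFn t).prod with hp
  have pos : HurwitzEquiv (conjT p t) t := Relation.EqvGen.symm _ _ (full_twist t)
  have neg : HurwitzEquiv (conjT p⁻¹ t) t := by
    have := pos.conjT p⁻¹
    rw [conjT_conjT, inv_mul_cancel, conjT_one] at this
    exact Relation.EqvGen.symm _ _ this
  induction k using Int.induction_on with
  | zero => rw [zpow_zero, conjT_one]; exact Relation.EqvGen.refl _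
  | succ k ih =>
    have : p ^ ((k : ℤ) + 1) = p ^ (k : ℤ) * p := by rw [zpow_add_one]
    rw [this, ← conjT_conjT]
    exact Relation.EqvGen.trans _ _ _ (pos.conjT (p ^ (k : ℤ))) ih
  | pred k ih =>
    have : p ^ (-(k : ℤ) - 1) = p ^ (-(k : ℤ)) * p⁻¹ := by rw [zpow_sub_one]
    rw [this, ← conjT_conjT]
    exact Relation.EqvGen.trans _ _ _ (neg.conjT (p ^ (-(k : ℤ)))) ih

/-- Chakiri's Lemma: a factorized expression `t = t 0 * ⋯ * t (m-1)`
in a group `G` is invariant under `t^k` for every integer `k`. -/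
theorem chakiri (t : Fin m → G) (k : ℤ) :
    FactorizationInvariant t ((List.ofFn t).prod ^ k) := by
  cases m with
  | zero =>
    have : (fun i => ((List.ofFn t).prod ^ k)⁻¹ * t i * ((List.ofFn t).prod ^ k)) = t := by
      funext i; exact i.elim0
    rw [FactorizationInvariant, this]
    exact Relation.EqvGen.refl _
  | succ n =>
    have h := conjT_equiv_int t (-k)
    have : conjT ((List.ofFn t).prod ^ (-k)) t
        = fun i => ((List.ofFn t).prod ^ k)⁻¹ * t i * ((List.ofFn t).prod ^ k) := by
      funext i
      simp [conjT, zpow_neg]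
    rwa [this] at h
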